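/- arXiv:1911.05656 — 8 statements merged into one kernel-verified Lean document; each statement's English description precedes it below -/
import Mathlib

section
/- Let K be a convex body in ℝⁿ and H a ν̄-symmetric matrix function on K, i.e., for every x ∈ K the ellipsoid E_x(1) = {y : (y−x)ᵀH(x)(y−x) ≤ 1} satisfies E_x(1) ⊆ K ∩ (2x−K) ⊆ E_x(√ν̄). Then for any x, y ∈ K, the cross-ratio distance satisfies d_K(x,y) ≥ ‖x−y‖_x / √ν̄, where ‖v‖_x² = vᵀH(x)v. -/
open Matrix

set_option maxHeartbeats 1000000 in
theorem stmt_3 {n : ℕ} (K : Set (EuclideanSpace ℝ (Fin n))) (hK : Convex ℝ K)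
    (hKc : IsCompact K) (hKi : (interior K).Nonempty)
    (H : EuclideanSpace ℝ (Fin n) → Matrix (Fin n) (Fin n) ℝ)
    (ν : ℝ) (hν : 0 < ν)
    (hpd : ∀ x ∈ K, (H x).PosDef)
    -- ν̄-symmetry: E_x(1) ⊆ K ∩ (2x − K) ⊆ E_x(√ν̄)
    (hsymm : ∀ x ∈ K,
      ({y : EuclideanSpace ℝ (Fin n) |
          (fun i => y i - x i) ⬝ᵥ (H x).mulVec (fun i => y i - x i) ≤ 1}
        ⊆ K ∩ {y | (2 : ℝ) • x - y ∈ K}) ∧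
      (K ∩ {y | (2 : ℝ) • x - y ∈ K} ⊆
        {y : EuclideanSpace ℝ (Fin n) |
          (fun i => y i - x i) ⬝ᵥ (H x).mulVec (fun i => y i - x i) ≤ ν}))
    (x y p q : EuclideanSpace ℝ (Fin n)) (hx : x ∈ K) (hy : y ∈ K)
    (hp : p ∈ K) (hq : q ∈ K)
    -- the chord through x and y has endpoints p, q, in the order p, x, y, q
    (hxc : x ∈ openSegment ℝ p y) (hyc : y ∈ openSegment ℝ x q) :
    ‖x - y‖ * ‖p - q‖ / (‖p - x‖ * ‖y - q‖) ≥
      Real.sqrt ((fun i => x i - y i) ⬝ᵥ (H x).mulVec (fun i => x i - y i)) /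
        Real.sqrt ν := by
  rcases eq_or_ne x y with rfl | hxy
  · have h0 : (fun i : Fin n => x i - x i) = (0 : Fin n → ℝ) := by
      funext i; simp
    rw [h0]
    simp only [Matrix.mulVec_zero, dotProduct_zero, Real.sqrt_zero, zero_div,
      sub_self, norm_zero, zero_mul, zero_div, ge_iff_le, le_refl]
  obtain ⟨a, b, ha, hb, hab, hxeq⟩ := hxc
  obtain ⟨c, d, hc, hd, hcd, hyeq⟩ := hyc
  have h1 : a • (p - x) = b • (x - y) := by
    have h2 : a • p + b • y = a • x + b • x := by
      rw [← add_smul, hab, one_smul, hxeq]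
    calc a • (p - x) = (a • p + b • y) - (a • x + b • y) := by rw [smul_sub]; abel
      _ = (a • x + b • x) - (a • x + b • y) := by rw [h2]
      _ = b • (x - y) := by rw [smul_sub]; abel
  have h2 : d • (q - x) = y - x := by
    calc d • (q - x) = (c • x + d • q) - (c • x + d • x) := by rw [smul_sub]; abel
      _ = y - (c + d) • x := by rw [hyeq, add_smul]
      _ = y - x := by rw [hcd, one_smul]
  obtain ⟨α, hαdef⟩ : ∃ t : ℝ, t = b / a := ⟨_, rfl⟩
  obtain ⟨β, hβdef⟩ : ∃ t : ℝ, t = d⁻¹ := ⟨_, rfl⟩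
  have hα : 0 < α := hαdef ▸ div_pos hb ha
  have hd1 : d < 1 := by linarith
  have hβ1 : 1 < β := hβdef ▸ (one_lt_inv₀ hd).mpr hd1
  have hβ : 0 < β := lt_trans one_pos hβ1
  have hpx : p - x = α • (x - y) := by
    rw [hαdef, div_eq_inv_mul, mul_smul, ← h1, inv_smul_smul₀ ha.ne']
  have hqx : q - x = β • (y - x) := by
    rw [hβdef, ← h2, inv_smul_smul₀ hd.ne']
  have hyqv : y - q = (β - 1) • (x - y) := by
    have : y - q = (y - x) - (q - x) := by abel
    rw [this, hqx, sub_smul, one_smul]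
    rw [smul_sub, smul_sub]; abel
  have hpqv : p - q = (α + β) • (x - y) := by
    have : p - q = (p - x) - (q - x) := by abel
    rw [this, hpx, hqx, add_smul, smul_sub, smul_sub, smul_sub]; abel
  have ht : (0:ℝ) < ‖x - y‖ := by
    rw [norm_pos_iff]; exact sub_ne_zero_of_ne hxy
  have npx : ‖p - x‖ = α * ‖x - y‖ := by
    rw [hpx, norm_smul, Real.norm_eq_abs, abs_of_pos hα]
  have nyq : ‖y - q‖ = (β - 1) * ‖x - y‖ := by
    rw [hyqv, norm_smul, Real.norm_eq_abs, abs_of_pos (by linarith)]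
  have npq : ‖p - q‖ = (α + β) * ‖x - y‖ := by
    rw [hpqv, norm_smul, Real.norm_eq_abs, abs_of_pos (by linarith)]
  -- the point z = x + m • (y - x) with m = min α β lies in K ∩ (2x - K)
  obtain ⟨m, hmdef⟩ : ∃ t : ℝ, t = min α β := ⟨_, rfl⟩
  have hm : 0 < m := hmdef ▸ lt_min hα hβ
  set z : EuclideanSpace ℝ (Fin n) := x + m • (y - x) with hzdef
  have hz1 : z ∈ K := by
    have hmd : m * d ≤ 1 := by
      have : m ≤ β := hmdef ▸ min_le_right _ _
      rw [hβdef] at this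
      calc m * d ≤ d⁻¹ * d := by
            exact mul_le_mul_of_nonneg_right this hd.le
        _ = 1 := inv_mul_cancel₀ hd.ne'
    have hzq : z = (1 - m * d) • x + (m * d) • q := by
      rw [hzdef]
      have : (y : EuclideanSpace ℝ (Fin n)) - x = d • (q - x) := h2.symm
      rw [this, smul_smul, sub_smul, one_smul, smul_sub]
      abel
    rw [hzq]
    exact hK hx hq (by linarith [mul_nonneg hm.le hd.le]) (by positivity) (by ring)
  have hz2 : (2 : ℝ) • x - z ∈ K := by
    have hma : m * (a / b) ≤ 1 := by
      have hmα : m ≤ α := hmdef ▸ min_le_left _ _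
      have hb' : (0:ℝ) < a / b := div_pos ha hb
      calc m * (a / b) ≤ α * (a / b) := mul_le_mul_of_nonneg_right hmα hb'.le
        _ = 1 := by rw [hαdef, div_mul_div_comm, mul_comm b a, div_self (mul_pos ha hb).ne']
    have hxyv : x - y = (a / b) • (p - x) := by
      rw [hpx, smul_smul]
      have : a / b * α = 1 := by rw [hαdef, div_mul_div_comm, mul_comm b a, div_self (mul_pos ha hb).ne']
      rw [this, one_smul]
    have hzq : (2 : ℝ) • x - z = (1 - m * (a / b)) • x + (m * (a / b)) • p := by
      rw [hzdef]
      have h3 : (2 : ℝ) • x - (x + m • (y - x)) = x + m • (x - y) := by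
        rw [two_smul, smul_sub, smul_sub]; abel
      rw [h3, hxyv, smul_smul, sub_smul, one_smul, smul_sub]
      abel
    rw [hzq]
    refine hK hx hp (by linarith [mul_nonneg hm.le (div_pos ha hb).le]) ?_ (by ring)
    positivity
  have hQz := ((hsymm x hx).2 ⟨hz1, hz2⟩ : _)
  simp only [Set.mem_setOf_eq] at hQz
  have hvec : (fun i => z i - x i) = m • (fun i => y i - x i) := by
    funext i
    have : z i = x i + m * (y i - x i) := by
      rw [hzdef]
      simp [PiLp.add_apply, PiLp.smul_apply, PiLp.sub_apply, smul_eq_mul]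
    rw [this]
    simp [smul_eq_mul]
  rw [hvec, smul_dotProduct, Matrix.mulVec_smul, dotProduct_smul, smul_eq_mul,
    smul_eq_mul] at hQz
  -- Q(x - y) = Q(y - x)
  have hneg : (fun i => x i - y i) = -(fun i => y i - x i) := by
    funext i; simp
  obtain ⟨Q, hQdef⟩ : ∃ t : ℝ,
      t = (fun i => y i - x i) ⬝ᵥ (H x).mulVec (fun i => y i - x i) := ⟨_, rfl⟩
  have hQeq : (fun i => x i - y i) ⬝ᵥ (H x).mulVec (fun i => x i - y i) = Q := by
    rw [hQdef, hneg, neg_dotProduct, Matrix.mulVec_neg, dotProduct_neg, neg_neg]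
  rw [← hQdef] at hQz
  have hQnn : 0 ≤ Q := by
    rw [hQdef]
    have := (hpd x hx).posSemidef.dotProduct_mulVec_nonneg (fun i => y i - x i)
    simpa using this
  -- √Q / √ν ≤ 1/m
  have hQle : m ^ 2 * Q ≤ ν := by
    calc m ^ 2 * Q = m * (m * Q) := by ring
      _ ≤ ν := hQz
  have hs1 : Real.sqrt Q / Real.sqrt ν ≤ 1 / m := by
    rw [div_le_div_iff₀ (Real.sqrt_pos.mpr hν) hm]
    have : Real.sqrt Q * m = Real.sqrt (m ^ 2 * Q) := by
      rw [Real.sqrt_mul (by positivity), Real.sqrt_sq hm.le, mul_comm]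
    rw [this]
    calc Real.sqrt (m ^ 2 * Q) ≤ Real.sqrt ν := Real.sqrt_le_sqrt hQle
      _ = 1 * Real.sqrt ν := (one_mul _).symm
  -- LHS ≥ 1/m
  have hlhs : ‖x - y‖ * ‖p - q‖ / (‖p - x‖ * ‖y - q‖) = (α + β) / (α * (β - 1)) := by
    rw [npx, nyq, npq, div_eq_div_iff
      (mul_pos (mul_pos hα ht) (mul_pos (by linarith : (0:ℝ) < β - 1) ht)).ne'
      (mul_pos hα (by linarith : (0:ℝ) < β - 1)).ne']
    ring
  have h1m : 1 / m ≤ (α + β) / (α * (β - 1)) := by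
    have hden : 0 < α * (β - 1) := mul_pos hα (by linarith)
    rcases le_total α β with hle | hle
    · rw [hmdef, min_eq_left hle, div_le_div_iff₀ hα hden]
      nlinarith
    · rw [hmdef, min_eq_right hle, div_le_div_iff₀ hβ hden]
      nlinarith
  rw [ge_iff_le, hQeq, hlhs]
  exact le_trans hs1 h1m
end

section
/- Let Y be a real-valued random variable with E[Y] = log r for some r > 0, such that E[|Y|] < ∞. Let (Y_j) be i.i.d. copies of Y, independent of an integer random variable N with P(N = i) = 1/(e·i!) for i = 0,1,2,…, and define X = e·∏_{j=1}^{N} Y_j (with the empty product equal to 1). Then E[X] = r. -/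
open MeasureTheory ProbabilityTheory
open scoped ENNReal

lemma lintegral_prod_iIndep {Ω : Type*} [MeasurableSpace Ω] {μ : Measure Ω}
    (f : ℕ → Ω → ℝ≥0∞) (hmeas : ∀ j, Measurable (f j))
    (hind : iIndepFun (m := fun _ : ℕ => (inferInstance : MeasurableSpace ℝ≥0∞)) f μ) (n : ℕ) :
    ∫⁻ ω, ∏ j ∈ Finset.range n, f j ω ∂μ = ∏ j ∈ Finset.range n, ∫⁻ ω, f j ω ∂μ := by
  have : IsProbabilityMeasure μ := hind.isProbabilityMeasure
  induction n with
  | zero => simp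
  | succ n ih =>
    have hpm : Measurable (fun ω => ∏ j ∈ Finset.range n, f j ω) :=
      Finset.measurable_prod _ (fun j _ => hmeas j)
    have hiid : IndepFun (fun ω => ∏ j ∈ Finset.range n, f j ω) (f n) μ := by
      have h := hind.indepFun_prod_range_succ hmeas n
      have he : (∏ j ∈ Finset.range n, f j) = fun ω => ∏ j ∈ Finset.range n, f j ω := by
        funext ω; exact Finset.prod_apply ω _ _
      rwa [he] at h
    have key := lintegral_mul_eq_lintegral_mul_lintegral_of_indepFun hpm (hmeas n) hiid
    have h1 : ∫⁻ ω, ∏ j ∈ Finset.range (n+1), f j ω ∂μ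
        = ∫⁻ ω, ((fun ω => ∏ j ∈ Finset.range n, f j ω) * f n) ω ∂μ := by
      refine lintegral_congr fun ω => ?_
      simp [Finset.prod_range_succ]
    rw [h1, key, ih, Finset.prod_range_succ]

lemma integral_prod_iIndep {Ω : Type*} [MeasurableSpace Ω] {μ : Measure Ω}
    [IsProbabilityMeasure μ]
    (f : ℕ → Ω → ℝ) (hmeas : ∀ j, Measurable (f j)) (hint : ∀ j, Integrable (f j) μ)
    (hind : iIndepFun (m := fun _ : ℕ => (inferInstance : MeasurableSpace ℝ)) f μ) (n : ℕ) :
    Integrable (fun ω => ∏ j ∈ Finset.range n, f j ω) μ ∧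
      ∫ ω, ∏ j ∈ Finset.range n, f j ω ∂μ = ∏ j ∈ Finset.range n, ∫ ω, f j ω ∂μ := by
  induction n with
  | zero => simpa using (integrable_const (1:ℝ))
  | succ n ih =>
    have hiid : IndepFun (fun ω => ∏ j ∈ Finset.range n, f j ω) (f n) μ := by
      have h := hind.indepFun_prod_range_succ hmeas n
      have he : (∏ j ∈ Finset.range n, f j) = fun ω => ∏ j ∈ Finset.range n, f j ω := by
        funext ω; exact Finset.prod_apply ω _ _
      rwa [he] at h
    have hmul : (fun ω => ∏ j ∈ Finset.range (n+1), f j ω)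
        = (fun ω => ∏ j ∈ Finset.range n, f j ω) * f n := by
      funext ω; simp [Finset.prod_range_succ]
    constructor
    · rw [hmul]; exact hiid.integrable_mul ih.1 (hint n)
    · rw [hmul, hiid.integral_mul_eq_mul_integral ih.1.1 (hint n).1, ih.2, Finset.prod_range_succ]

def mAux5 : ∀ i : Option ℕ, MeasurableSpace (Option.rec ℕ (fun _ => ℝ) i) :=
  fun i : Option ℕ => Option.rec (motive := fun i => MeasurableSpace (Option.rec ℕ (fun _ => ℝ) i))
    (inferInstance : MeasurableSpace ℕ) (fun _ => (inferInstance : MeasurableSpace ℝ)) i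

def fAux5 {Ω : Type*} (Y : ℕ → Ω → ℝ) (N : Ω → ℕ) : ∀ i : Option ℕ, Ω → Option.rec ℕ (fun _ => ℝ) i :=
  fun i : Option ℕ => Option.rec (motive := fun i => Ω → Option.rec ℕ (fun _ => ℝ) i)
    N (fun j => Y j) i

theorem stmt_5 {Ω : Type*} [MeasurableSpace Ω] (μ : Measure Ω) [IsProbabilityMeasure μ]
    (r : ℝ) (hr : 0 < r)
    (Y : ℕ → Ω → ℝ) (N : Ω → ℕ)
    (hYmeas : ∀ j, Measurable (Y j)) (hNmeas : Measurable N)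
    -- E[|Y|] < ∞
    (hint : Integrable (Y 0) μ)
    -- E[Y] = log r
    (hmean : ∀ j, ∫ ω, Y j ω ∂μ = Real.log r)
    -- the Y_j are identically distributed
    (hident : ∀ j, Measure.map (Y j) μ = Measure.map (Y 0) μ)
    -- N, Y_0, Y_1, … are jointly independent
    (hindep : iIndepFun
      (m := fun i : Option ℕ => Option.rec (motive := fun i => MeasurableSpace (Option.rec ℕ (fun _ => ℝ) i))
        (inferInstance : MeasurableSpace ℕ) (fun _ => (inferInstance : MeasurableSpace ℝ)) i)
      (fun i : Option ℕ => Option.rec (motive := fun i => Ω → Option.rec ℕ (fun _ => ℝ) i)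
        N (fun j => Y j) i) μ)
    -- N is Poisson(1): P(N = i) = 1/(e·i!)
    (hN : ∀ i : ℕ, μ {ω | N ω = i} = ENNReal.ofReal (1 / (Real.exp 1 * Nat.factorial i))) :
    ∫ ω, (Real.exp 1 * ∏ j ∈ Finset.range (N ω), Y j ω) ∂μ = r := by
  classical
  have hfmeas : ∀ i : Option ℕ, @Measurable Ω (Option.rec ℕ (fun _ => ℝ) i) ‹MeasurableSpace Ω› (mAux5 i) (fAux5 Y N i) := by
    intro i; cases i with
    | none => exact hNmeas
    | some j => exact hYmeas j
  -- the Y's alone are mutually independent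
  have hYindep : iIndepFun (m := fun _ : ℕ => (inferInstance : MeasurableSpace ℝ)) Y μ := by
    rw [iIndepFun_iff_measure_inter_preimage_eq_mul]
    intro S sets hsets
    have h := hindep.measure_inter_preimage_eq_mul (S.image some)
      (sets := fun i => Option.rec (motive := fun i => Set (Option.rec ℕ (fun _ => ℝ) i))
        Set.univ (fun j => sets j) i)
      (by
        intro i hi
        simp only [Finset.mem_image] at hi
        obtain ⟨j, hj, rfl⟩ := hi
        exact hsets j hj)
    rw [Finset.set_biInter_finset_image,
      Finset.prod_image (fun x _ y _ h => Option.some_injective ℕ h)] at h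
    exact h
  -- product of first i Y's is independent of N
  have hprodN : ∀ i : ℕ, IndepFun (fun ω => ∏ j ∈ Finset.range i, Y j ω) N μ := by
    intro i
    have hdisj : Disjoint ((Finset.range i).image some) ({none} : Finset (Option ℕ)) := by
      simp [Finset.disjoint_right]
    have h := hindep.indepFun_finset ((Finset.range i).image some) {none} hdisj hfmeas
    letI iS : MeasurableSpace (∀ x : ((Finset.range i).image some : Finset (Option ℕ)),
        Option.rec ℕ (fun _ => ℝ) x.1) := @MeasurableSpace.pi _ _ (fun x => mAux5 x.1)
    letI iT : MeasurableSpace (∀ x : ({none} : Finset (Option ℕ)),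
        Option.rec ℕ (fun _ => ℝ) x.1) := @MeasurableSpace.pi _ _ (fun x => mAux5 x.1)
    have hF : Measurable (fun v : (∀ x : ((Finset.range i).image some : Finset (Option ℕ)),
        Option.rec ℕ (fun _ => ℝ) x.1) =>
        ∏ j ∈ (Finset.range i).attach,
          (v ⟨some j.1, Finset.mem_image_of_mem some j.2⟩ : ℝ)) :=
      Finset.measurable_prod _ (fun j _ =>
        @measurable_pi_apply ((Finset.range i).image some : Finset (Option ℕ))
          (fun x => Option.rec ℕ (fun _ => ℝ) x.1) (fun x => mAux5 x.1)
          ⟨some j.1, Finset.mem_image_of_mem some j.2⟩)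
    have hG : Measurable (fun v : (∀ x : ({none} : Finset (Option ℕ)),
        Option.rec ℕ (fun _ => ℝ) x.1) => (v ⟨none, Finset.mem_singleton_self none⟩ : ℕ)) :=
      @measurable_pi_apply (({none} : Finset (Option ℕ)))
        (fun x => Option.rec ℕ (fun _ => ℝ) x.1) (fun x => mAux5 x.1)
        ⟨none, Finset.mem_singleton_self none⟩
    have h2 := h.comp hF hG
    have he : (fun ω => ∏ j ∈ Finset.range i, Y j ω)
        = fun a => ∏ j ∈ (Finset.range i).attach, Y j.1 a := by
      funext a; exact (Finset.prod_attach _ _).symm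
    rw [he]
    exact h2
  -- identically distributed ⇒ all integrable with the same mean
  have hYint : ∀ j, Integrable (Y j) μ := by
    intro j
    have h0 : Integrable id (Measure.map (Y 0) μ) := by
      rw [integrable_map_measure aestronglyMeasurable_id (hYmeas 0).aemeasurable]
      simpa using hint
    have hj : Integrable id (Measure.map (Y j) μ) := by rw [hident j]; exact h0
    rw [integrable_map_measure aestronglyMeasurable_id (hYmeas j).aemeasurable] at hj
    simpa using hj
  have hprod := fun i => integral_prod_iIndep Y hYmeas hYint hYindep i
  have hprodval : ∀ i, ∫ ω, ∏ j ∈ Finset.range i, Y j ω ∂μ = (Real.log r) ^ i := by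
    intro i; rw [(hprod i).2]; simp [hmean]
  -- the pieces
  set g : ℕ → Ω → ℝ := fun i ω => Set.indicator {ω' | N ω' = i}
      (fun ω' => Real.exp 1 * ∏ j ∈ Finset.range i, Y j ω') ω with hgdef
  have hNset : ∀ i : ℕ, MeasurableSet {ω | N ω = i} := fun i =>
    hNmeas (measurableSet_singleton i)
  have hgmeas : ∀ i, Measurable (g i) := fun i =>
    (Measurable.indicator (measurable_const.mul
      (Finset.measurable_prod _ (fun j _ => hYmeas j))) (hNset i))
  have hgapply : ∀ (i : ℕ) (ω : Ω), g i ω = Set.indicator {ω' | N ω' = i}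
      (fun ω' => Real.exp 1 * ∏ j ∈ Finset.range i, Y j ω') ω := fun i ω => by
    rw [hgdef]
  have hpt : (fun ω => Real.exp 1 * ∏ j ∈ Finset.range (N ω), Y j ω)
      = fun ω => ∑' i, g i ω := by
    funext ω
    have h0 : ∀ i, i ≠ N ω → g i ω = 0 := fun i hi => by
      rw [hgapply]
      exact Set.indicator_of_notMem (by simp [Ne.symm hi]) _
    rw [tsum_eq_single (f := fun i => g i ω) (N ω) h0, hgapply]
    exact (Set.indicator_of_mem (show ω ∈ {ω' | N ω' = N ω} from rfl)
      (fun ω' => Real.exp 1 * ∏ j ∈ Finset.range (N ω), Y j ω')).symm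
  have hsplit : ∀ i : ℕ, g i = (Set.indicator {ω' | N ω' = i} (fun _ => (1:ℝ))) *
      (fun ω => Real.exp 1 * ∏ j ∈ Finset.range i, Y j ω) := by
    intro i; funext ω
    by_cases h : N ω = i <;>
      simp [hgdef, Set.indicator_apply, Set.mem_setOf_eq, h]
  have hIndInt : ∀ i : ℕ, Integrable (Set.indicator {ω' | N ω' = i} (fun _ => (1:ℝ))) μ :=
    fun i => (integrable_const (1:ℝ)).indicator (hNset i)
  have hbigInt : ∀ i : ℕ, Integrable (fun ω => Real.exp 1 * ∏ j ∈ Finset.range i, Y j ω) μ :=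
    fun i => (hprod i).1.const_mul _
  have hindic_indep : ∀ i : ℕ, IndepFun (Set.indicator {ω' | N ω' = i} (fun _ => (1:ℝ)))
      (fun ω => Real.exp 1 * ∏ j ∈ Finset.range i, Y j ω) μ := by
    intro i
    have h2 := ((hprodN i).symm).comp
      (φ := fun n : ℕ => Set.indicator ({i} : Set ℕ) (fun _ => (1:ℝ)) n)
      (ψ := fun x : ℝ => Real.exp 1 * x)
      (Measurable.of_discrete) (measurable_id.const_mul _)
    have he1 : (fun n : ℕ => Set.indicator ({i} : Set ℕ) (fun _ => (1:ℝ)) n) ∘ N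
        = Set.indicator {ω' | N ω' = i} (fun _ => (1:ℝ)) := by
      funext ω
      by_cases h : N ω = i <;> simp [Set.indicator_apply, h]
    rwa [he1] at h2
  have hPi : ∀ i : ℕ, (μ {ω | N ω = i}).toReal = 1 / (Real.exp 1 * Nat.factorial i) := by
    intro i; rw [hN i, ENNReal.toReal_ofReal (by positivity)]
  have hfacne : ∀ i : ℕ, (Nat.factorial i : ℝ) ≠ 0 :=
    fun i => Nat.cast_ne_zero.mpr (Nat.factorial_ne_zero i)
  have hgint : ∀ i, ∫ ω, g i ω ∂μ = (Real.log r) ^ i / Nat.factorial i := by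
    intro i
    have hmul := (hindic_indep i).integral_mul_eq_mul_integral (hIndInt i).1 (hbigInt i).1
    have h1 : ∫ ω, g i ω ∂μ = ∫ ω, ((Set.indicator {ω' | N ω' = i} (fun _ => (1:ℝ))) *
        (fun ω => Real.exp 1 * ∏ j ∈ Finset.range i, Y j ω)) ω ∂μ := by
      rw [← hsplit i]
    rw [h1, hmul, integral_indicator_const (1:ℝ) (hNset i),
      integral_const_mul, hprodval i, measureReal_def, hPi i]
    rw [smul_eq_mul, mul_one]
    field_simp [Real.exp_ne_zero, hfacne i]
  -- lintegral bound
  set v : ℕ → Ω → ℝ≥0∞ := fun j ω => (‖Y j ω‖₊ : ℝ≥0∞) with hvdef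
  have hvmeas : ∀ j, Measurable (v j) := fun j => (hYmeas j).nnnorm.coe_nnreal_ennreal
  have hvindep : iIndepFun (m := fun _ : ℕ => (inferInstance : MeasurableSpace ℝ≥0∞)) v μ :=
    hYindep.comp (fun _ => fun x : ℝ => (‖x‖₊ : ℝ≥0∞))
      (fun _ => measurable_nnnorm.coe_nnreal_ennreal)
  have hvint : ∀ j, ∫⁻ ω, v j ω ∂μ = ∫⁻ ω, v 0 ω ∂μ := by
    intro j
    have hm : Measurable (fun x : ℝ => (‖x‖₊ : ℝ≥0∞)) :=
      measurable_nnnorm.coe_nnreal_ennreal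
    calc ∫⁻ ω, v j ω ∂μ = ∫⁻ x, (‖x‖₊ : ℝ≥0∞) ∂(Measure.map (Y j) μ) :=
          (lintegral_map hm (hYmeas j)).symm
      _ = ∫⁻ x, (‖x‖₊ : ℝ≥0∞) ∂(Measure.map (Y 0) μ) := by rw [hident j]
      _ = ∫⁻ ω, v 0 ω ∂μ := lintegral_map hm (hYmeas 0)
  set c := (∫⁻ ω, v 0 ω ∂μ).toReal with hcdef
  have hLvne : (∫⁻ ω, v 0 ω ∂μ) ≠ ⊤ := hint.2.ne
  have hLvc : (∫⁻ ω, v 0 ω ∂μ) = ENNReal.ofReal c := (ENNReal.ofReal_toReal hLvne).symm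
  have hc0 : 0 ≤ c := ENNReal.toReal_nonneg
  have hlint : ∀ i, ∫⁻ ω, (‖g i ω‖₊ : ℝ≥0∞) ∂μ
      = ENNReal.ofReal (c ^ i / Nat.factorial i) := by
    intro i
    set u : Ω → ℝ≥0∞ := Set.indicator {ω' | N ω' = i} (fun _ => (1:ℝ≥0∞)) with hudef
    set k : Ω → ℝ≥0∞ := fun ω => (‖Real.exp 1 * ∏ j ∈ Finset.range i, Y j ω‖₊ : ℝ≥0∞)
      with hkdef
    have humeas : Measurable u := measurable_const.indicator (hNset i)
    have hkmeas : Measurable k :=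
      (measurable_const.mul (Finset.measurable_prod _ (fun j _ => hYmeas j))).nnnorm.coe_nnreal_ennreal
    have hindepuk : IndepFun u k μ := by
      have h2 := ((hprodN i).symm).comp
        (φ := fun n : ℕ => Set.indicator ({i} : Set ℕ) (fun _ => (1:ℝ≥0∞)) n)
        (ψ := fun x : ℝ => (‖Real.exp 1 * x‖₊ : ℝ≥0∞))
        (Measurable.of_discrete)
        ((measurable_id.const_mul _).nnnorm.coe_nnreal_ennreal)
      have he1 : (fun n : ℕ => Set.indicator ({i} : Set ℕ) (fun _ => (1:ℝ≥0∞)) n) ∘ N = u := by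
        funext ω
        by_cases h : N ω = i <;> simp [hudef, Set.indicator_apply, h]
      rwa [he1] at h2
    have hsplit2 : (fun ω => (‖g i ω‖₊ : ℝ≥0∞)) = fun ω => (u * k) ω := by
      funext ω
      by_cases h : N ω = i <;>
        simp [hgdef, hudef, hkdef, Set.indicator_apply, h]
    have hkval : ∫⁻ ω, k ω ∂μ
        = ENNReal.ofReal (Real.exp 1) * ENNReal.ofReal c ^ i := by
      have hke : k = fun ω => (‖Real.exp 1‖₊ : ℝ≥0∞) * ∏ j ∈ Finset.range i, v j ω := by
        funext ω
        simp [hkdef, hvdef, nnnorm_mul, nnnorm_prod, ENNReal.coe_mul, ENNReal.coe_finset_prod]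
      rw [hke, lintegral_const_mul _ (Finset.measurable_prod _ (fun j _ => hvmeas j)),
        lintegral_prod_iIndep v hvmeas hvindep i]
      have : ∏ j ∈ Finset.range i, ∫⁻ ω, v j ω ∂μ = ENNReal.ofReal c ^ i := by
        rw [Finset.prod_congr rfl (fun j _ => (hvint j).trans hLvc)]
        simp
      rw [this, ← enorm_eq_nnnorm, ← ofReal_norm,
        Real.norm_of_nonneg (Real.exp_pos 1).le]
    have hu : ∫⁻ ω, u ω ∂μ = μ {ω' | N ω' = i} := lintegral_indicator_one (hNset i)
    calc ∫⁻ ω, (‖g i ω‖₊ : ℝ≥0∞) ∂μ = ∫⁻ ω, (u * k) ω ∂μ := by rw [hsplit2]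
      _ = (∫⁻ ω, u ω ∂μ) * ∫⁻ ω, k ω ∂μ :=
          lintegral_mul_eq_lintegral_mul_lintegral_of_indepFun humeas hkmeas hindepuk
      _ = ENNReal.ofReal (1 / (Real.exp 1 * Nat.factorial i)) *
          (ENNReal.ofReal (Real.exp 1) * ENNReal.ofReal c ^ i) := by
          rw [hu, hN i, hkval]
      _ = ENNReal.ofReal (c ^ i / Nat.factorial i) := by
          rw [← ENNReal.ofReal_pow hc0, ← ENNReal.ofReal_mul (Real.exp_pos 1).le,
            ← ENNReal.ofReal_mul (by positivity)]
          congr 1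
          field_simp [Real.exp_ne_zero, hfacne i]
  have hsum_ne : (∑' i, ∫⁻ ω, (‖g i ω‖₊ : ℝ≥0∞) ∂μ) ≠ ⊤ := by
    rw [tsum_congr hlint,
      ← ENNReal.ofReal_tsum_of_nonneg (fun i => by positivity)
        (Real.summable_pow_div_factorial c)]
    exact ENNReal.ofReal_ne_top
  rw [hpt, integral_tsum (fun i => (hgmeas i).aestronglyMeasurable) hsum_ne,
    tsum_congr hgint]
  have hexp : ∑' i : ℕ, (Real.log r) ^ i / (Nat.factorial i : ℝ) = Real.exp (Real.log r) := by
    rw [Real.exp_eq_exp_ℝ]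
    exact (congrFun NormedSpace.exp_eq_tsum_div (Real.log r)).symm
  rw [hexp, Real.exp_log hr]
end

section
/- The Hessian of the log barrier is strongly self-concordant: for a polytope P = {x : Ax > b} with A ∈ ℝ^{m×n}, let S_x = Diag(Ax−b) and H(x) = AᵀS_x^{-2}A. Then for any x in the interior of P and any direction h, ‖H(x)^{-1/2} DH(x)[h] H(x)^{-1/2}‖_F ≤ 2‖h‖_{H(x)}. -/
open Matrix

/-- Frobenius norm of a real matrix. -/
noncomputable def frobNorm {n m : ℕ} (M : Matrix (Fin n) (Fin m) ℝ) : ℝ :=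
  Real.sqrt (∑ i, ∑ j, (M i j) ^ 2)

/-- Local norm `‖v‖_H = sqrt(vᵀ H v)`. -/
noncomputable def locNorm {n : ℕ} (H : Matrix (Fin n) (Fin n) ℝ) (v : Fin n → ℝ) : ℝ :=
  Real.sqrt (v ⬝ᵥ H.mulVec v)

/-! ### Auxiliary lemmas -/

lemma traceTM {p q : ℕ} (Z : Matrix (Fin p) (Fin q) ℝ) :
    (Zᵀ * Z).trace = ∑ j, ∑ i, Z i j ^ 2 := by
  simp [Matrix.trace, Matrix.mul_apply, Matrix.diag, sq]

lemma traceTM_nonneg {p q : ℕ} (Z : Matrix (Fin p) (Fin q) ℝ) : 0 ≤ (Zᵀ * Z).trace := by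
  rw [traceTM]; positivity

lemma quadForm {m n : ℕ} (A : Matrix (Fin m) (Fin n) ℝ) (d : Fin m → ℝ) (u : Fin n → ℝ) :
    u ⬝ᵥ (Aᵀ * Matrix.diagonal d * A).mulVec u = ∑ k, d k * (A.mulVec u k) ^ 2 := by
  rw [← Matrix.mulVec_mulVec, ← Matrix.mulVec_mulVec, Matrix.dotProduct_mulVec,
    Matrix.vecMul_transpose]
  simp [dotProduct, Matrix.mulVec_diagonal, sq]
  exact Finset.sum_congr rfl fun k _ => by ring

lemma entryForm {m n : ℕ} (A : Matrix (Fin m) (Fin n) ℝ) (d : Fin m → ℝ) (i j : Fin n) :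
    (Aᵀ * Matrix.diagonal d * A) i j = ∑ k, A k i * d k * A k j := by
  rw [Matrix.mul_assoc, Matrix.mul_apply]
  simp [Matrix.mul_apply, Matrix.diagonal_apply, ite_mul, mul_assoc]

lemma posdefH {m n : ℕ} (A : Matrix (Fin m) (Fin n) ℝ)
    (hrank : ∀ z : Fin n → ℝ, A.mulVec z = 0 → z = 0)
    (d : Fin m → ℝ) (hd : ∀ k, 0 < d k) : (Aᵀ * Matrix.diagonal d * A).PosDef := by
  rw [Matrix.posDef_iff_dotProduct_mulVec]
  constructor
  · rw [Matrix.IsHermitian, conjTranspose_eq_transpose_of_trivial]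
    rw [Matrix.transpose_mul, Matrix.transpose_mul, Matrix.transpose_transpose,
      Matrix.diagonal_transpose, Matrix.mul_assoc]
  · intro z hz
    have hz' : A.mulVec z ≠ 0 := fun hc => hz (hrank z hc)
    obtain ⟨k0, hk0⟩ : ∃ k, A.mulVec z k ≠ 0 := by
      by_contra hc
      push_neg at hc
      exact hz' (funext hc)
    have : (0 : ℝ) < ∑ k, d k * (A.mulVec z k) ^ 2 := by
      apply Finset.sum_pos' (fun k _ => mul_nonneg (hd k).le (sq_nonneg _))
      exact ⟨k0, Finset.mem_univ _, mul_pos (hd k0) (pow_two_pos_of_ne_zero hk0)⟩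
    simpa [quadForm] using this

lemma derOne (sk vk : ℝ) (hsk : sk ≠ 0) (aki akj : ℝ) :
    HasDerivAt (fun t : ℝ => aki * ((sk + t * vk) ^ 2)⁻¹ * akj)
      (aki * (-(2 * (sk + 0 * vk) ^ 1 * (1 * vk)) / ((sk + 0 * vk) ^ 2) ^ 2) * akj) 0 := by
  have h1 : HasDerivAt (fun t : ℝ => sk + t * vk) (1 * vk) 0 :=
    ((hasDerivAt_id 0).mul_const vk).const_add sk
  have h2 := (h1.pow 2).inv (by simpa using pow_ne_zero 2 hsk)
  exact (h2.const_mul aki).mul_const akj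

lemma diagFactor {m : ℕ} (s v : Fin m → ℝ) (hs : ∀ k, s k ≠ 0) :
    Matrix.diagonal (fun k => -(2 * (s k + 0 * v k) ^ 1 * (1 * v k)) / ((s k + 0 * v k) ^ 2) ^ 2)
      = Matrix.diagonal (fun k => (s k)⁻¹) * Matrix.diagonal (fun k => -(2 * v k) / s k)
        * Matrix.diagonal (fun k => (s k)⁻¹) := by
  simp only [Matrix.diagonal_mul_diagonal]
  have : (fun k => -(2 * (s k + 0 * v k) ^ 1 * (1 * v k)) / ((s k + 0 * v k) ^ 2) ^ 2)
      = fun k => (s k)⁻¹ * (-(2 * v k) / s k) * (s k)⁻¹ := by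
    funext k
    have := hs k
    field_simp
    simp only [zero_mul, add_zero]
    rw [mul_comm, mul_div_assoc, div_self (pow_ne_zero 3 this), mul_one]
  rw [this]

lemma keyTrace {k : ℕ} (P W : Matrix (Fin k) (Fin k) ℝ)
    (hPsym : Pᵀ = P) (hPP : P * P = P) (hWsym : Wᵀ = W) :
    (W * P * W * P).trace ≤ (W * W).trace := by
  set Q : Matrix (Fin k) (Fin k) ℝ := 1 - P with hQdef
  have hQsym : Qᵀ = Q := by rw [hQdef, transpose_sub, transpose_one, hPsym]
  have hQQ : Q * Q = Q := by
    have h2 : Q * Q = 1 - P - P + P * P := by rw [hQdef]; noncomm_ring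
    rw [h2, hPP, hQdef]; abel
  have hZ1 : 0 ≤ ((Q * (W * P))ᵀ * (Q * (W * P))).trace := traceTM_nonneg _
  have e1 : (Q * (W * P))ᵀ * (Q * (W * P)) = P * (W * (W * P)) - P * (W * (P * (W * P))) := by
    rw [transpose_mul, transpose_mul, hPsym, hWsym, hQsym]
    calc P * W * Q * (Q * (W * P)) = P * (W * ((Q * Q) * (W * P))) := by
          simp only [Matrix.mul_assoc]
      _ = P * (W * (Q * (W * P))) := by rw [hQQ]
      _ = P * (W * (W * P)) - P * (W * (P * (W * P))) := by
          rw [hQdef]; simp only [Matrix.sub_mul, Matrix.one_mul, Matrix.mul_sub]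
  have t1 : (P * (W * (P * (W * P)))).trace = (W * P * W * P).trace := by
    rw [Matrix.trace_mul_comm]
    simp only [Matrix.mul_assoc]
    rw [hPP]
  have t2 : (P * (W * (W * P))).trace = (W * (W * P)).trace := by
    rw [Matrix.trace_mul_comm]
    simp only [Matrix.mul_assoc]
    rw [hPP]
  have step1 : (W * P * W * P).trace ≤ (W * (W * P)).trace := by
    rw [e1, Matrix.trace_sub, t1, t2] at hZ1
    linarith
  have hZ2 : 0 ≤ ((Q * W)ᵀ * (Q * W)).trace := traceTM_nonneg _
  have e2 : (Q * W)ᵀ * (Q * W) = W * W - W * (P * W) := by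
    rw [transpose_mul, hWsym, hQsym]
    calc W * Q * (Q * W) = W * ((Q * Q) * W) := by simp only [Matrix.mul_assoc]
      _ = W * (Q * W) := by rw [hQQ]
      _ = W * W - W * (P * W) := by
          rw [hQdef]; simp only [Matrix.sub_mul, Matrix.one_mul, Matrix.mul_sub]
  have t3 : (W * (P * W)).trace = (W * (W * P)).trace := by
    calc (W * (P * W)).trace = ((P * W) * W).trace := Matrix.trace_mul_comm _ _
      _ = (P * (W * W)).trace := by simp only [Matrix.mul_assoc]
      _ = ((W * W) * P).trace := Matrix.trace_mul_comm _ _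
      _ = (W * (W * P)).trace := by simp only [Matrix.mul_assoc]
  have step2 : (W * (W * P)).trace ≤ (W * W).trace := by
    rw [e2, Matrix.trace_sub, t3] at hZ2
    linarith
  linarith

theorem stmt_7 {m n : ℕ} (A : Matrix (Fin m) (Fin n) ℝ) (b : Fin m → ℝ)
    -- A has full column rank
    (hrank : ∀ z : Fin n → ℝ, A.mulVec z = 0 → z = 0)
    -- H is the Hessian of the log barrier: H(x) = Aᵀ S_x⁻² A
    (H : (Fin n → ℝ) → Matrix (Fin n) (Fin n) ℝ)
    (hH : ∀ x, H x = Aᵀ * Matrix.diagonal (fun i => (((A.mulVec x - b) i) ^ 2)⁻¹) * A)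
    (x : Fin n → ℝ) (hx : ∀ i, b i < A.mulVec x i)
    (h : Fin n → ℝ)
    -- DH = DH(x)[h], the directional derivative of H at x in direction h
    (DH : Matrix (Fin n) (Fin n) ℝ)
    (hDH : ∀ i j, HasDerivAt (fun t : ℝ => H (x + t • h) i j) (DH i j) 0)
    -- R is H(x)^{-1/2}
    (R : Matrix (Fin n) (Fin n) ℝ)
    (hRpsd : R.PosSemidef) (hRR : R * R = (H x)⁻¹) :
    frobNorm (R * DH * R) ≤ 2 * locNorm (H x) h := by
  classical
  obtain ⟨s, hs_def⟩ : ∃ s : Fin m → ℝ, s = fun k => A.mulVec x k - b k := ⟨_, rfl⟩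
  have hs : ∀ k, 0 < s k := by intro k; rw [hs_def]; exact sub_pos.mpr (hx k)
  have hsne : ∀ k, s k ≠ 0 := fun k => (hs k).ne'
  obtain ⟨v, hv_def⟩ : ∃ v : Fin m → ℝ, v = A.mulVec h := ⟨_, rfl⟩
  have hHx : H x = Aᵀ * Matrix.diagonal (fun k => ((s k) ^ 2)⁻¹) * A := by
    rw [hH, hs_def]
    rfl
  have hpd : (H x).PosDef := by
    rw [hHx]
    exact posdefH A hrank _ (fun k => by have := hs k; positivity)
  -- identify DH
  have hDHeq : DH = Aᵀ * Matrix.diagonal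
      (fun k => -(2 * (s k + 0 * v k) ^ 1 * (1 * v k)) / ((s k + 0 * v k) ^ 2) ^ 2) * A := by
    ext i j
    rw [entryForm]
    have hfun : (fun t : ℝ => H (x + t • h) i j)
        = fun t => ∑ k, A k i * ((s k + t * v k) ^ 2)⁻¹ * A k j := by
      funext t
      rw [hH, entryForm]
      apply Finset.sum_congr rfl
      intro k _
      have hk : (A.mulVec (x + t • h) - b) k = s k + t * v k := by
        rw [hs_def, hv_def]
        simp [Matrix.mulVec_add, Matrix.mulVec_smul]
        ring
      rw [hk]
    have hder : HasDerivAt (fun t : ℝ => ∑ k, A k i * ((s k + t * v k) ^ 2)⁻¹ * A k j)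
        (∑ k, A k i * (-(2 * (s k + 0 * v k) ^ 1 * (1 * v k)) / ((s k + 0 * v k) ^ 2) ^ 2)
          * A k j) 0 :=
      HasDerivAt.fun_sum fun k _ => derOne (s k) (v k) (hsne k) (A k i) (A k j)
    have hthis := hDH i j
    rw [hfun] at hthis
    exact hthis.unique hder
  obtain ⟨N, hN_def⟩ : ∃ N : Matrix (Fin m) (Fin n) ℝ,
      N = Matrix.diagonal (fun k => (s k)⁻¹) * A := ⟨_, rfl⟩
  obtain ⟨w, hw_def⟩ : ∃ w : Fin m → ℝ, w = fun k => -(2 * v k) / s k := ⟨_, rfl⟩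
  obtain ⟨W, hW_def⟩ : ∃ W : Matrix (Fin m) (Fin m) ℝ, W = Matrix.diagonal w := ⟨_, rfl⟩
  have hNt : Nᵀ = Aᵀ * Matrix.diagonal (fun k => (s k)⁻¹) := by
    rw [hN_def, Matrix.transpose_mul, Matrix.diagonal_transpose]
  have hDHfact : DH = Nᵀ * W * N := by
    rw [hDHeq, diagFactor s v hsne, hNt, hN_def, hW_def, hw_def]
    simp only [Matrix.mul_assoc]
  have hdd : (Matrix.diagonal fun k => (s k)⁻¹) * (Matrix.diagonal fun k => (s k)⁻¹)
      = Matrix.diagonal fun k => ((s k) ^ 2)⁻¹ := by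
    have hfe : (fun k => (s k)⁻¹ * (s k)⁻¹) = fun k => ((s k) ^ 2)⁻¹ := by
      funext k
      rw [sq, mul_inv]
    rw [Matrix.diagonal_mul_diagonal, hfe]
  have hHfact : H x = Nᵀ * N := by
    have hassoc : (Aᵀ * Matrix.diagonal fun k => (s k)⁻¹)
          * ((Matrix.diagonal fun k => (s k)⁻¹) * A)
        = Aᵀ * (((Matrix.diagonal fun k => (s k)⁻¹)
          * (Matrix.diagonal fun k => (s k)⁻¹)) * A) := by
      simp only [Matrix.mul_assoc]
    rw [hHx, hNt, hN_def, hassoc, hdd, ← Matrix.mul_assoc]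
  -- R facts
  have hRsym : Rᵀ = R := by
    have h1 := hRpsd.1
    rwa [Matrix.IsHermitian, conjTranspose_eq_transpose_of_trivial] at h1
  have hRHR : R * H x * R = 1 := by
    have h1 : R * (R * H x) = 1 := by
      rw [← Matrix.mul_assoc, hRR,
        Matrix.nonsing_inv_mul _ ((Matrix.isUnit_iff_isUnit_det _).mp hpd.isUnit)]
    exact mul_eq_one_comm.mp h1
  obtain ⟨B, hB_def⟩ : ∃ B : Matrix (Fin m) (Fin n) ℝ, B = N * R := ⟨_, rfl⟩
  have hBt : Bᵀ = R * Nᵀ := by rw [hB_def, Matrix.transpose_mul, hRsym]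
  have hBtB : Bᵀ * B = 1 := by
    rw [hBt, hB_def, Matrix.mul_assoc, ← Matrix.mul_assoc Nᵀ N R, ← hHfact,
      ← Matrix.mul_assoc, hRHR]
  obtain ⟨P, hP_def⟩ : ∃ P : Matrix (Fin m) (Fin m) ℝ, P = B * Bᵀ := ⟨_, rfl⟩
  have hPsym : Pᵀ = P := by
    rw [hP_def, Matrix.transpose_mul, Matrix.transpose_transpose]
  have hPP : P * P = P := by
    rw [hP_def, Matrix.mul_assoc, ← Matrix.mul_assoc Bᵀ B Bᵀ, hBtB, Matrix.one_mul]
  have hWsym : Wᵀ = W := by rw [hW_def, Matrix.diagonal_transpose]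
  -- M = Bᵀ W B
  have hM : R * DH * R = Bᵀ * W * B := by
    rw [hDHfact, hBt, hB_def]
    simp only [Matrix.mul_assoc]
  have hMsym : (R * DH * R)ᵀ = R * DH * R := by
    rw [hM, Matrix.transpose_mul, Matrix.transpose_mul, Matrix.transpose_transpose, hWsym,
      ← Matrix.mul_assoc]
  -- Frobenius norm squared as a trace
  have hsum : ∑ i, ∑ j, (R * DH * R) i j ^ 2 = (W * P * W * P).trace := by
    rw [Finset.sum_comm, ← traceTM, hMsym, hM, hP_def]
    simp only [Matrix.mul_assoc]
    rw [Matrix.trace_mul_comm]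
    simp only [Matrix.mul_assoc]
  -- quadratic form
  have hq : h ⬝ᵥ (H x).mulVec h = ∑ k, ((s k) ^ 2)⁻¹ * (v k) ^ 2 := by
    rw [hHx, quadForm, hv_def]
  have hqnn : 0 ≤ h ⬝ᵥ (H x).mulVec h := by
    rw [hq]; positivity
  have hWW : (W * W).trace = 4 * (h ⬝ᵥ (H x).mulVec h) := by
    rw [hW_def, Matrix.diagonal_mul_diagonal, Matrix.trace_diagonal, hq, Finset.mul_sum]
    apply Finset.sum_congr rfl
    intro k _
    rw [hw_def]
    have := hsne k
    field_simp
    ring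
  have hkey := keyTrace P W hPsym hPP hWsym
  have hfinal : ∑ i, ∑ j, (R * DH * R) i j ^ 2 ≤ 4 * (h ⬝ᵥ (H x).mulVec h) := by
    rw [hsum, ← hWW]; exact hkey
  rw [frobNorm, locNorm]
  calc Real.sqrt (∑ i, ∑ j, (R * DH * R) i j ^ 2)
      ≤ Real.sqrt (4 * (h ⬝ᵥ (H x).mulVec h)) := Real.sqrt_le_sqrt hfinal
    _ = 2 * Real.sqrt (h ⬝ᵥ (H x).mulVec h) := by
        rw [show (4 : ℝ) * (h ⬝ᵥ (H x).mulVec h) = 2 ^ 2 * (h ⬝ᵥ (H x).mulVec h) by ring,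
          Real.sqrt_mul (by positivity), Real.sqrt_sq (by norm_num)]
end

section
/- For an orthogonal projection matrix P ∈ ℝ^{m×m} (P² = P = Pᵀ) with leverage scores σ_i = P_{ii}, the Hadamard square satisfies P∘P ⪯ Diag(σ), where (P∘P)_{ij} = P_{ij}². Consequently, for any vector u ∈ ℝ^m, tr(P Diag(u) P Diag(u)) = uᵀ(P∘P)u ≤ ∑_i σ_i u_i². -/
open Matrix

theorem stmt_8 {m : ℕ} (P : Matrix (Fin m) (Fin m) ℝ)
    (hsym : P.IsSymm) (hidem : P * P = P) :
    (Matrix.diagonal (fun i => P i i) - Matrix.hadamard P P).PosSemidef ∧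
    ∀ u : Fin m → ℝ,
      (P * Matrix.diagonal u * P * Matrix.diagonal u).trace
        = u ⬝ᵥ (Matrix.hadamard P P).mulVec u ∧
      u ⬝ᵥ (Matrix.hadamard P P).mulVec u ≤ ∑ i, P i i * u i ^ 2 := by
  have hs : ∀ i j, P j i = P i j := fun i j => by
    have := congrFun (congrFun hsym i) j
    simpa [Matrix.transpose_apply] using this
  have hdiag : ∀ i, P i i = ∑ j, P i j ^ 2 := by
    intro i
    conv_lhs => rw [← hidem]
    rw [Matrix.mul_apply]
    exact Finset.sum_congr rfl fun j _ => by rw [hs i j]; ring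
  have hquad : ∀ u : Fin m → ℝ,
      u ⬝ᵥ (Matrix.diagonal (fun i => P i i) - Matrix.hadamard P P).mulVec u
        = (∑ i, ∑ j, P i j ^ 2 * (u i - u j) ^ 2) / 2 := by
    intro u
    have swap : ∑ i, ∑ j, P i j ^ 2 * u j ^ 2 = ∑ i, ∑ j, P i j ^ 2 * u i ^ 2 := by
      rw [Finset.sum_comm]
      exact Finset.sum_congr rfl fun i _ => Finset.sum_congr rfl fun j _ => by
        rw [hs i j]
    have hD : u ⬝ᵥ (Matrix.diagonal (fun i => P i i)).mulVec u
        = ∑ i, ∑ j, P i j ^ 2 * u i ^ 2 := by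
      simp only [dotProduct, Matrix.mulVec_diagonal]
      refine Finset.sum_congr rfl fun i _ => ?_
      rw [hdiag i, Finset.sum_mul, Finset.mul_sum]
      exact Finset.sum_congr rfl fun j _ => by ring
    have hH : u ⬝ᵥ (Matrix.hadamard P P).mulVec u
        = ∑ i, ∑ j, P i j ^ 2 * (u i * u j) := by
      simp only [dotProduct, Matrix.mulVec, Matrix.hadamard_apply]
      refine Finset.sum_congr rfl fun i _ => ?_
      rw [Finset.mul_sum]
      exact Finset.sum_congr rfl fun j _ => by ring
    have lhs_eq : u ⬝ᵥ (Matrix.diagonal (fun i => P i i) - Matrix.hadamard P P).mulVec u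
        = ∑ i, ∑ j, (P i j ^ 2 * u i ^ 2 - P i j ^ 2 * (u i * u j)) := by
      rw [Matrix.sub_mulVec, dotProduct_sub, hD, hH, ← Finset.sum_sub_distrib]
      exact Finset.sum_congr rfl fun i _ => (Finset.sum_sub_distrib _ _).symm
    rw [lhs_eq]
    have expand : ∑ i, ∑ j, P i j ^ 2 * (u i - u j) ^ 2
        = ∑ i, ∑ j, (P i j ^ 2 * u i ^ 2 - 2 * (P i j ^ 2 * (u i * u j)) + P i j ^ 2 * u j ^ 2) := by
      exact Finset.sum_congr rfl fun i _ => Finset.sum_congr rfl fun j _ => by ring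
    rw [expand]
    simp only [Finset.sum_add_distrib, Finset.sum_sub_distrib, ← Finset.mul_sum]
    rw [swap]
    ring
  constructor
  · refine Matrix.PosSemidef.of_dotProduct_mulVec_nonneg ?_ ?_
    · ext i j
      simp only [Matrix.conjTranspose_apply, Matrix.sub_apply, Matrix.diagonal_apply,
        Matrix.hadamard_apply, star_trivial]
      rw [hs i j]
      by_cases h : i = j <;> simp [h, eq_comm]
    · intro x
      rw [star_trivial, hquad x]
      positivity
  · intro u
    constructor
    · simp only [Matrix.trace, Matrix.diag_apply, Matrix.mul_apply, Matrix.diagonal_apply,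
        dotProduct, Matrix.mulVec, Matrix.hadamard_apply, mul_ite, mul_zero,
        ite_mul, zero_mul, Finset.sum_ite_eq, Finset.sum_ite_eq', Finset.mem_univ, if_true]
      refine Finset.sum_congr rfl fun i _ => ?_
      rw [Finset.sum_mul, Finset.mul_sum]
      refine Finset.sum_congr rfl fun j _ => ?_
      rw [hs i j]
      ring
    · have h0 := hquad u
      have hpos : 0 ≤ u ⬝ᵥ (Matrix.diagonal (fun i => P i i) - Matrix.hadamard P P).mulVec u := by
        rw [h0]; positivity
      rw [Matrix.sub_mulVec, dotProduct_sub, sub_nonneg] at hpos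
      calc u ⬝ᵥ (Matrix.hadamard P P).mulVec u
          ≤ u ⬝ᵥ (Matrix.diagonal (fun i => P i i)).mulVec u := hpos
        _ = ∑ i, P i i * u i ^ 2 := by
            simp only [dotProduct, Matrix.mulVec_diagonal]
            exact Finset.sum_congr rfl fun i _ => by ring
end

section
/- For any symmetric matrix M ∈ ℝ^{n×n}, |tr(M)| ≤ √n · ‖M‖_F. Consequently, if H is a strongly self-concordant matrix function (‖H(x)^{-1/2}DH(x)[h]H(x)^{-1/2}‖_F ≤ 2‖h‖_x), then the function f(x) = log det H(x) satisfies ‖H(x)^{-1/2} ∇f(x)‖₂ ≤ 2√n for all x. -/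
open Matrix

lemma trace_le_sqrt_frob {n : ℕ} (M : Matrix (Fin n) (Fin n) ℝ) :
    |M.trace| ≤ Real.sqrt n * frobNorm M := by
  have h1 : (M.trace)^2 ≤ (n : ℝ) * ∑ i, (M i i)^2 := by
    have := sq_sum_le_card_mul_sum_sq (s := Finset.univ) (f := fun i => M i i)
    simpa [Matrix.trace, Matrix.diag] using this
  have h2 : ∑ i, (M i i)^2 ≤ ∑ i, ∑ j, (M i j)^2 := by
    apply Finset.sum_le_sum
    intro i _
    exact Finset.single_le_sum (f := fun j => (M i j)^2) (fun j _ => sq_nonneg _) (Finset.mem_univ i)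
  calc |M.trace| = Real.sqrt ((M.trace)^2) := (Real.sqrt_sq_eq_abs _).symm
    _ ≤ Real.sqrt ((n:ℝ) * ∑ i, ∑ j, (M i j)^2) := by
        apply Real.sqrt_le_sqrt
        refine h1.trans ?_
        have hn : (0:ℝ) ≤ n := by positivity
        exact mul_le_mul_of_nonneg_left h2 hn
    _ = Real.sqrt n * frobNorm M := Real.sqrt_mul (by positivity) _

theorem stmt_9 {n : ℕ} (K : Set (Fin n → ℝ)) (hK : Convex ℝ K)
    (H : (Fin n → ℝ) → Matrix (Fin n) (Fin n) ℝ)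
    (DH : (Fin n → ℝ) → (Fin n → ℝ) → Matrix (Fin n) (Fin n) ℝ)
    (hpd : ∀ x ∈ K, (H x).PosDef)
    (hlin : ∀ x ∈ K, IsLinearMap ℝ (DH x))
    -- `R x` is the inverse square root `H(x)^{-1/2}`
    (R : (Fin n → ℝ) → Matrix (Fin n) (Fin n) ℝ)
    (hR : ∀ x ∈ K, (R x).PosSemidef ∧ R x * R x = (H x)⁻¹)
    -- strong self-concordance
    (hssc : ∀ x ∈ K, ∀ h : Fin n → ℝ,
      frobNorm (R x * DH x h * R x) ≤ 2 * locNorm (H x) h) :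
    -- (a) trace vs Frobenius norm
    (∀ M : Matrix (Fin n) (Fin n) ℝ, M.IsSymm → |M.trace| ≤ Real.sqrt n * frobNorm M) ∧
    -- (b) the gradient g of f(x) = log det H(x), with Df(x)[u] = tr(H(x)⁻¹ DH(x)[u]),
    --     satisfies ‖H(x)^{-1/2} g‖₂ ≤ 2√n
    (∀ x ∈ K, ∀ g : Fin n → ℝ,
      (∀ u : Fin n → ℝ, g ⬝ᵥ u = ((H x)⁻¹ * DH x u).trace) →
      Real.sqrt (∑ i, ((R x).mulVec g i) ^ 2) ≤ 2 * Real.sqrt n) := by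
  constructor
  · intro M _
    exact trace_le_sqrt_frob M
  · intro x hx g hg
    obtain ⟨hRsd, hRR⟩ := hR x hx
    have hpdx := hpd x hx
    set u : Fin n → ℝ := ((H x)⁻¹).mulVec g with hu
    set v : Fin n → ℝ := (R x).mulVec g with hv
    set t : ℝ := Real.sqrt (∑ i, v i ^ 2) with ht
    have ht0 : 0 ≤ t := Real.sqrt_nonneg _
    have hRsymm : (R x)ᵀ = R x := by
      have := hRsd.isHermitian
      simpa [Matrix.IsHermitian, Matrix.conjTranspose_eq_transpose_of_trivial] using this
    -- ∑ v² = g ⬝ᵥ u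
    have s1 : ∑ i, v i ^ 2 = g ⬝ᵥ u := by
      have : ∑ i, v i ^ 2 = v ⬝ᵥ v := by simp [dotProduct, sq]
      rw [this, hv, hu, ← hRR]
      rw [Matrix.dotProduct_mulVec, ← Matrix.mulVec_transpose, hRsymm, Matrix.mulVec_mulVec]
      exact dotProduct_comm _ _
    -- g ⬝ᵥ u = trace (R * DH u * R)
    have s2 : g ⬝ᵥ u = (R x * DH x u * R x).trace := by
      rw [hg u, ← hRR, mul_assoc, Matrix.trace_mul_comm]
    -- locNorm (H x) u = t
    have hHu : (H x).mulVec u = g := by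
      rw [hu, Matrix.mulVec_mulVec, Matrix.mul_nonsing_inv _ (isUnit_iff_ne_zero.mpr hpdx.det_pos.ne'), Matrix.one_mulVec]
    have s3 : locNorm (H x) u = t := by
      rw [locNorm, hHu, dotProduct_comm, ← s1, ht]
    -- combine
    have key : t ^ 2 ≤ 2 * Real.sqrt n * t := by
      have h0 : (0:ℝ) ≤ ∑ i, v i ^ 2 := Finset.sum_nonneg fun i _ => sq_nonneg _
      have ht2 : t ^ 2 = ∑ i, v i ^ 2 := Real.sq_sqrt h0
      have habs : ∑ i, v i ^ 2 ≤ |(R x * DH x u * R x).trace| := by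
        rw [s1, s2]; exact le_abs_self _
      calc t ^ 2 = ∑ i, v i ^ 2 := ht2
        _ ≤ |(R x * DH x u * R x).trace| := habs
        _ ≤ Real.sqrt n * frobNorm (R x * DH x u * R x) := trace_le_sqrt_frob _
        _ ≤ Real.sqrt n * (2 * locNorm (H x) u) := by
            exact mul_le_mul_of_nonneg_left (hssc x hx u) (Real.sqrt_nonneg _)
        _ = 2 * Real.sqrt n * t := by rw [s3]; ring
    rcases eq_or_lt_of_le ht0 with h | h
    · rw [← h]; positivity
    · have := le_of_mul_le_mul_right (by nlinarith [key] : t * t ≤ (2 * Real.sqrt n) * t) h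
      exact this
end

section
/- Let λ_1,…,λ_n > 0 satisfy ∑_i (λ_i − 1)² ≤ (1/(256√n))² ≤ 1/256². Then (a) ∏_{i : λ_i < 1} λ_i ≥ e^{-1/128}, and (b) ∏_{i : λ_i > 1} λ_i ≤ e^{1/256}. In particular, the ratio of the volume of the ellipsoid with semi-axes min(√λ_i, 1) to the volume of the unit ball is at least e^{-1/256}, and to the volume of the ellipsoid with semi-axes √λ_i is at least e^{-1/512}. -/
open Finset Real

private lemma exp_neg_two_le_aux (x : ℝ) (h0 : 0 ≤ x) (h1 : x ≤ 1/2) :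
    Real.exp (-(2*x)) ≤ 1 - x := by
  have h2 : 2*x + 1 ≤ Real.exp (2*x) := Real.add_one_le_exp (2*x)
  have hm : Real.exp (-(2*x)) * Real.exp (2*x) = 1 := by
    rw [← Real.exp_add]; simp
  have hmul := mul_le_mul_of_nonneg_left h2 (by linarith : (0:ℝ) ≤ 1 - x)
  nlinarith [Real.exp_pos (2*x), Real.exp_pos (-(2*x))]

private lemma sqrt_prod_aux {ι : Type*} (s : Finset ι) (f : ι → ℝ)
    (h : ∀ i ∈ s, 0 ≤ f i) :
    Real.sqrt (∏ i ∈ s, f i) = ∏ i ∈ s, Real.sqrt (f i) := by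
  induction s using Finset.cons_induction with
  | empty => simp
  | cons a s ha ih =>
    rw [Finset.prod_cons, Finset.prod_cons,
      Real.sqrt_mul (h a (Finset.mem_cons_self a s)),
      ih (fun i hi => h i (Finset.mem_cons_of_mem hi))]

theorem stmt_10 {n : ℕ} (lam : Fin n → ℝ) (hpos : ∀ i, 0 < lam i)
    (hsum : ∑ i, (lam i - 1) ^ 2 ≤ (1 / (256 * Real.sqrt n)) ^ 2)
    (hb : (1 / (256 * Real.sqrt n)) ^ 2 ≤ 1 / 256 ^ 2) :
    (∏ i ∈ Finset.univ.filter (fun i => lam i < 1), lam i) ≥ Real.exp (-(1 / 128)) ∧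
    (∏ i ∈ Finset.univ.filter (fun i => 1 < lam i), lam i) ≤ Real.exp (1 / 256) ∧
    (∏ i, min (Real.sqrt (lam i)) 1) ≥ Real.exp (-(1 / 256)) ∧
    (∏ i, min (Real.sqrt (lam i)) 1) / (∏ i, Real.sqrt (lam i)) ≥ Real.exp (-(1 / 512)) := by
  -- Cauchy–Schwarz bound on any subset
  have habs : ∀ A : Finset (Fin n), ∑ i ∈ A, |lam i - 1| ≤ 1/256 := by
    intro A
    rcases Nat.eq_zero_or_pos n with hn | hn
    · subst hn
      have : A = ∅ := Finset.eq_empty_of_isEmpty A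
      simp [this]
    · have hn1 : (1:ℝ) ≤ (n:ℝ) := by exact_mod_cast hn
      have hT0 : 0 ≤ ∑ i ∈ A, |lam i - 1| :=
        Finset.sum_nonneg fun i _ => abs_nonneg _
      have hcs : (∑ i ∈ A, |lam i - 1|) ^ 2 ≤ (A.card : ℝ) * ∑ i ∈ A, |lam i - 1| ^ 2 :=
        sq_sum_le_card_mul_sum_sq
      have hsq : ∑ i ∈ A, |lam i - 1| ^ 2 = ∑ i ∈ A, (lam i - 1) ^ 2 := by
        simp [sq_abs]
      have hsub : ∑ i ∈ A, (lam i - 1) ^ 2 ≤ ∑ i, (lam i - 1) ^ 2 :=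
        Finset.sum_le_sum_of_subset_of_nonneg (Finset.subset_univ A)
          (fun i _ _ => sq_nonneg _)
      have hcard : (A.card : ℝ) ≤ (n:ℝ) := by
        exact_mod_cast (Finset.card_le_card (Finset.subset_univ A)).trans
          (by simp [Finset.card_univ])
      have hval : (n:ℝ) * (1 / (256 * Real.sqrt n)) ^ 2 = (1/256)^2 := by
        have hsn : Real.sqrt n ^ 2 = (n:ℝ) := Real.sq_sqrt (by positivity)
        have hsnpos : 0 < Real.sqrt n := Real.sqrt_pos.2 (by linarith)
        field_simp
        nlinarith [hsn]
      have hS0 : 0 ≤ ∑ i, (lam i - 1) ^ 2 := Finset.sum_nonneg fun i _ => sq_nonneg _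
      have h2 : (∑ i ∈ A, |lam i - 1|) ^ 2 ≤ (1/256)^2 := by
        calc (∑ i ∈ A, |lam i - 1|) ^ 2
            ≤ (A.card : ℝ) * ∑ i, (lam i - 1) ^ 2 := by
              refine hcs.trans ?_
              rw [hsq]
              exact mul_le_mul_of_nonneg_left hsub (by positivity)
          _ ≤ (n:ℝ) * (1 / (256 * Real.sqrt n)) ^ 2 := by
              apply mul_le_mul hcard hsum hS0 (by linarith)
          _ = (1/256)^2 := hval
      nlinarith
  -- per-index bound on the "small" side
  set A : Finset (Fin n) := Finset.univ.filter (fun i => lam i < 1) with hA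
  have hApos : ∀ i ∈ A, 0 ≤ 1 - lam i := by
    intro i hi
    rw [hA, Finset.mem_filter] at hi
    linarith [hi.2]
  have hsumA : ∑ i ∈ A, (1 - lam i) ≤ 1/256 := by
    refine le_trans (le_of_eq (Finset.sum_congr rfl fun i hi => ?_)) (habs A)
    rw [abs_sub_comm, abs_of_nonneg (hApos i hi)]
  have hsmall : ∀ i ∈ A, 1 - lam i ≤ 1/256 := by
    intro i hi
    exact le_trans (Finset.single_le_sum hApos hi) hsumA
  -- Part (a)
  have parta : Real.exp (-(1/128)) ≤ ∏ i ∈ A, lam i := by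
    have h1 : Real.exp (-(1/128)) ≤ Real.exp (∑ i ∈ A, -(2 * (1 - lam i))) := by
      apply Real.exp_le_exp.2
      have : ∑ i ∈ A, -(2 * (1 - lam i)) = -(2 * ∑ i ∈ A, (1 - lam i)) := by
        rw [Finset.mul_sum, ← Finset.sum_neg_distrib]
      rw [this]
      linarith [hsumA]
    refine h1.trans ?_
    rw [Real.exp_sum]
    apply Finset.prod_le_prod (fun i _ => (Real.exp_pos _).le)
    intro i hi
    have := exp_neg_two_le_aux (1 - lam i) (hApos i hi) (by linarith [hsmall i hi])
    linarith [this]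
  -- Part (b') for the closed filter
  set B : Finset (Fin n) := Finset.univ.filter (fun i => ¬ lam i < 1) with hB
  have hBge : ∀ i ∈ B, 1 ≤ lam i := by
    intro i hi
    rw [hB, Finset.mem_filter] at hi
    exact not_lt.1 hi.2
  have partb' : ∏ i ∈ B, lam i ≤ Real.exp (1/256) := by
    calc ∏ i ∈ B, lam i ≤ ∏ i ∈ B, Real.exp (lam i - 1) := by
          apply Finset.prod_le_prod (fun i _ => (hpos i).le)
          intro i _
          linarith [Real.add_one_le_exp (lam i - 1)]
      _ = Real.exp (∑ i ∈ B, (lam i - 1)) := (Real.exp_sum _ _).symm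
      _ ≤ Real.exp (1/256) := by
          apply Real.exp_le_exp.2
          refine le_trans (Finset.sum_le_sum fun i _ => le_abs_self _) (habs B)
  -- Part (b)
  have partb : ∏ i ∈ Finset.univ.filter (fun i => 1 < lam i), lam i ≤ Real.exp (1/256) := by
    calc ∏ i ∈ Finset.univ.filter (fun i => 1 < lam i), lam i
        ≤ ∏ i ∈ Finset.univ.filter (fun i => 1 < lam i), Real.exp (lam i - 1) := by
          apply Finset.prod_le_prod (fun i _ => (hpos i).le)
          intro i _
          linarith [Real.add_one_le_exp (lam i - 1)]
      _ = Real.exp (∑ i ∈ Finset.univ.filter (fun i => 1 < lam i), (lam i - 1)) :=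
          (Real.exp_sum _ _).symm
      _ ≤ Real.exp (1/256) := by
          apply Real.exp_le_exp.2
          refine le_trans (Finset.sum_le_sum fun i _ => le_abs_self _) (habs _)
  -- product of mins
  have hminA : ∀ i ∈ A, min (Real.sqrt (lam i)) 1 = Real.sqrt (lam i) := by
    intro i hi
    rw [hA, Finset.mem_filter] at hi
    exact min_eq_left (Real.sqrt_le_one.2 hi.2.le)
  have hminB : ∀ i ∈ B, min (Real.sqrt (lam i)) 1 = 1 := by
    intro i hi
    exact min_eq_right (Real.one_le_sqrt.2 (hBge i hi))
  have hsplit : ∏ i, min (Real.sqrt (lam i)) 1 = ∏ i ∈ A, Real.sqrt (lam i) := by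
    rw [← Finset.prod_filter_mul_prod_filter_not Finset.univ (fun i => lam i < 1)
      (fun i => min (Real.sqrt (lam i)) 1)]
    rw [Finset.prod_congr rfl hminA, Finset.prod_congr rfl hminB]
    simp
  have hAprod : ∏ i ∈ A, Real.sqrt (lam i) = Real.sqrt (∏ i ∈ A, lam i) :=
    (sqrt_prod_aux A lam (fun i _ => (hpos i).le)).symm
  have hBprod : ∏ i ∈ B, Real.sqrt (lam i) = Real.sqrt (∏ i ∈ B, lam i) :=
    (sqrt_prod_aux B lam (fun i _ => (hpos i).le)).symm
  -- Part (c)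
  have partc : Real.exp (-(1/256)) ≤ ∏ i, min (Real.sqrt (lam i)) 1 := by
    rw [hsplit, hAprod]
    have : Real.exp (-(1/256)) = Real.sqrt (Real.exp (-(1/128))) := by
      rw [← Real.exp_half]; norm_num
    rw [this]
    exact Real.sqrt_le_sqrt parta
  -- Part (d)
  have hPA : (0:ℝ) < ∏ i ∈ A, Real.sqrt (lam i) :=
    Finset.prod_pos fun i _ => Real.sqrt_pos.2 (hpos i)
  have hPB : (0:ℝ) < ∏ i ∈ B, Real.sqrt (lam i) :=
    Finset.prod_pos fun i _ => Real.sqrt_pos.2 (hpos i)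
  have hfull : ∏ i, Real.sqrt (lam i) =
      (∏ i ∈ A, Real.sqrt (lam i)) * (∏ i ∈ B, Real.sqrt (lam i)) :=
    (Finset.prod_filter_mul_prod_filter_not Finset.univ (fun i => lam i < 1) _).symm
  have partd : Real.exp (-(1/512)) ≤
      (∏ i, min (Real.sqrt (lam i)) 1) / (∏ i, Real.sqrt (lam i)) := by
    rw [hsplit, hfull, div_mul_cancel_left₀ hPA.ne']
    have hQ : ∏ i ∈ B, Real.sqrt (lam i) ≤ Real.exp (1/512) := by
      rw [hBprod]
      have : Real.exp (1/512) = Real.sqrt (Real.exp (1/256)) := by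
        rw [← Real.exp_half]; norm_num
      rw [this]
      exact Real.sqrt_le_sqrt partb'
    have : Real.exp (-(1/512)) = (Real.exp (1/512))⁻¹ := by
      rw [← Real.exp_neg]
    rw [this]
    exact inv_anti₀ hPB hQ
  exact ⟨parta, partb, partc, partd⟩
end

section
/- Let A ∈ ℝ^{m×n}, x in the interior of the polytope P = {y : Ay > b}, and let w ∈ ℝ^m with 0 ≤ w_i ≤ 1 for all i and ∑_i w_i = n. Let q = 2(1 + ln m) ≥ 2 and H = A_xᵀ W^{1−2/q} A_x where A_x = Diag(Ax−b)^{-1}A and W = Diag(w). Then for any y ∈ P ∩ (2x − P), (x−y)ᵀ H (x−y) ≤ ∑_{i=1}^m w_i^{1−2/q} ≤ n^{1−2/q} m^{2/q} ≤ e·n. -/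
open Matrix

theorem stmt_12 {m n : ℕ} (hm : 1 ≤ m) (hn : 1 ≤ n)
    (A : Matrix (Fin m) (Fin n) ℝ) (b : Fin m → ℝ)
    (x : Fin n → ℝ) (hx : ∀ i, b i < A.mulVec x i)
    (w : Fin m → ℝ) (hw0 : ∀ i, 0 ≤ w i) (hw1 : ∀ i, w i ≤ 1)
    (hwsum : ∑ i, w i = (n : ℝ))
    (q : ℝ) (hq : q = 2 * (1 + Real.log m))
    -- H = A_xᵀ W^{1-2/q} A_x with A_x = Diag(Ax-b)⁻¹ A
    (H : Matrix (Fin n) (Fin n) ℝ)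
    (hH : H = (Matrix.diagonal (fun i => ((A.mulVec x - b) i)⁻¹) * A)ᵀ *
        Matrix.diagonal (fun i => w i ^ (1 - 2 / q)) *
        (Matrix.diagonal (fun i => ((A.mulVec x - b) i)⁻¹) * A))
    -- y ∈ P ∩ (2x − P)
    (y : Fin n → ℝ) (hy : ∀ i, b i < A.mulVec y i)
    (hy2 : ∀ i, b i < A.mulVec ((2 : ℝ) • x - y) i) :
    (x - y) ⬝ᵥ H.mulVec (x - y) ≤ ∑ i, w i ^ (1 - 2 / q) ∧
    ∑ i, w i ^ (1 - 2 / q) ≤ (n : ℝ) ^ (1 - 2 / q) * (m : ℝ) ^ (2 / q) ∧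
    (n : ℝ) ^ (1 - 2 / q) * (m : ℝ) ^ (2 / q) ≤ Real.exp 1 * n := by
  have hm1 : (1 : ℝ) ≤ (m : ℝ) := by exact_mod_cast hm
  have hn1 : (1 : ℝ) ≤ (n : ℝ) := by exact_mod_cast hn
  have hlog : 0 ≤ Real.log m := Real.log_nonneg hm1
  have hqpos : 0 < q := by rw [hq]; linarith
  have hq2 : 2 ≤ q := by rw [hq]; linarith
  have h2q0 : 0 ≤ 2 / q := by positivity
  have h2q1 : 2 / q ≤ 1 := by
    rw [div_le_one hqpos]; linarith
  set α : ℝ := 1 - 2 / q with hα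
  have hα0 : 0 ≤ α := by simp [hα]; linarith
  have hα1 : α ≤ 1 := by simp [hα]; linarith
  -- Part 1
  have part1 : (x - y) ⬝ᵥ H.mulVec (x - y) ≤ ∑ i, w i ^ α := by
    set c : Fin m → ℝ := fun i => ((A.mulVec x - b) i)⁻¹ with hc
    set d : Fin m → ℝ := fun i => w i ^ α with hd
    have hform : (x - y) ⬝ᵥ H.mulVec (x - y)
        = ∑ i, (c i * (A.mulVec (x - y)) i) * (d i * (c i * (A.mulVec (x - y)) i)) := by
      rw [hH, Matrix.mul_assoc]
      simp only [← Matrix.mulVec_mulVec]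
      rw [Matrix.dotProduct_mulVec, Matrix.vecMul_transpose]
      simp only [← Matrix.mulVec_mulVec]
      rw [dotProduct]
      refine Finset.sum_congr rfl fun i _ => ?_
      rw [Matrix.mulVec_diagonal, Matrix.mulVec_diagonal, Matrix.mulVec_diagonal]
    rw [hform]
    refine Finset.sum_le_sum fun i _ => ?_
    have hsi : 0 < (A.mulVec x - b) i := by
      simpa [Pi.sub_apply] using sub_pos.mpr (hx i)
    have hAv : (A.mulVec (x - y)) i = A.mulVec x i - A.mulVec y i := by
      simp [Matrix.mulVec_sub, Pi.sub_apply]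
    have hct : c i * (A.mulVec (x - y)) i
        = (A.mulVec (x - y)) i / ((A.mulVec x - b) i) := by
      rw [hc, inv_mul_eq_div]
    have hub : (A.mulVec (x - y)) i < (A.mulVec x - b) i := by
      rw [hAv]; have := hy i; simp only [Pi.sub_apply]; linarith
    have hlb : -((A.mulVec x - b) i) < (A.mulVec (x - y)) i := by
      have h2 := hy2 i
      have he : A.mulVec ((2 : ℝ) • x - y) i = 2 * A.mulVec x i - A.mulVec y i := by
        simp [Matrix.mulVec_sub, Matrix.mulVec_smul, Pi.sub_apply, Pi.smul_apply,
          smul_eq_mul]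
      rw [he] at h2
      rw [hAv]; simp only [Pi.sub_apply]; linarith
    have h1 : c i * (A.mulVec (x - y)) i ≤ 1 := by
      rw [hct, div_le_one hsi]; exact hub.le
    have h2 : -1 ≤ c i * (A.mulVec (x - y)) i := by
      rw [hct, le_div_iff₀ hsi]; linarith
    have hsq : (c i * (A.mulVec (x - y)) i) ^ 2 ≤ 1 := by nlinarith
    have hdi : 0 ≤ d i := Real.rpow_nonneg (hw0 i) α
    calc (c i * (A.mulVec (x - y)) i) * (d i * (c i * (A.mulVec (x - y)) i))
        = d i * (c i * (A.mulVec (x - y)) i) ^ 2 := by ring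
      _ ≤ d i * 1 := mul_le_mul_of_nonneg_left hsq hdi
      _ = d i := mul_one _
  -- Part 2
  have part2 : ∑ i, w i ^ α ≤ (n : ℝ) ^ α * (m : ℝ) ^ (2 / q) := by
    rcases eq_or_lt_of_le hm1 with hm1' | hm2
    · -- m = 1, q = 2, α = 0
      have hlogz : Real.log m = 0 := by rw [← hm1']; simp
      have hq2' : q = 2 := by rw [hq, hlogz]; ring
      have hαz : α = 0 := by rw [hα, hq2']; norm_num
      have hmeq : m = 1 := by exact_mod_cast hm1'.symm
      subst hmeq
      simp [hαz, Real.rpow_zero]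
    · -- m ≥ 2, α > 0
      have hlogpos : 0 < Real.log m := Real.log_pos hm2
      have hqgt2 : 2 < q := by rw [hq]; linarith
      have hαpos : 0 < α := by
        rw [hα, sub_pos, div_lt_one hqpos]; linarith
      have hp1 : 1 ≤ 1 / α := by
        rw [le_div_iff₀ hαpos]; linarith
      have hmpos : (0 : ℝ) < m := by linarith
      have key := Real.arith_mean_le_rpow_mean Finset.univ
        (fun _ : Fin m => (m : ℝ)⁻¹) (fun i => w i ^ α)
        (fun i _ => by positivity)
        (by rw [Finset.sum_const, Finset.card_univ, Fintype.card_fin, nsmul_eq_mul,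
              mul_inv_cancel₀ hmpos.ne'])
        (fun i _ => Real.rpow_nonneg (hw0 i) α) hp1
      have hback : ∀ i, (w i ^ α) ^ ((1 : ℝ) / α) = w i := fun i => by
        rw [← Real.rpow_mul (hw0 i)]
        rw [mul_one_div, div_self hαpos.ne', Real.rpow_one]
      simp only [hback, one_div_one_div] at key
      rw [← Finset.mul_sum, ← Finset.mul_sum, hwsum] at key
      have key2 : ∑ i, w i ^ α ≤ (m : ℝ) * ((m : ℝ)⁻¹ * n) ^ α := by
        have h := mul_le_mul_of_nonneg_left key hmpos.le
        rwa [← mul_assoc, mul_inv_cancel₀ hmpos.ne', one_mul] at h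
      have hrw : (m : ℝ) * ((m : ℝ)⁻¹ * n) ^ α = (n : ℝ) ^ α * (m : ℝ) ^ (2 / q) := by
        have e1 : (m : ℝ) ^ (2 / q) = (m : ℝ) ^ ((1 : ℝ) + (-α)) := by
          congr 1; rw [hα]; ring
        rw [e1, Real.rpow_add hmpos, Real.rpow_one, Real.rpow_neg hmpos.le,
          ← Real.inv_rpow hmpos.le,
          Real.mul_rpow (by positivity) (by positivity)]
        ring
      rw [← hrw]
      exact key2
  -- Part 3
  have part3 : (n : ℝ) ^ α * (m : ℝ) ^ (2 / q) ≤ Real.exp 1 * n := by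
    have h1 : (n : ℝ) ^ α ≤ (n : ℝ) := by
      calc (n : ℝ) ^ α ≤ (n : ℝ) ^ (1 : ℝ) :=
            Real.rpow_le_rpow_of_exponent_le hn1 hα1
        _ = n := Real.rpow_one _
    have h2 : (m : ℝ) ^ (2 / q) ≤ Real.exp 1 := by
      have hmpos : (0 : ℝ) < m := by linarith
      rw [Real.rpow_def_of_pos hmpos]
      apply Real.exp_le_exp.mpr
      rw [hq, ← mul_div_assoc, div_le_one (by linarith)]
      linarith
    calc (n : ℝ) ^ α * (m : ℝ) ^ (2 / q)
        ≤ (n : ℝ) * Real.exp 1 := by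
          apply mul_le_mul h1 h2 (by positivity) (by linarith)
      _ = Real.exp 1 * n := mul_comm _ _
  exact ⟨part1, part2, part3⟩
end

section
/- Let p be an isotropic probability distribution on ℝⁿ (mean zero, identity covariance) such that for every unit vector v, ‖E_{x∼p}[xxᵀ(xᵀv)]‖_F ≤ C. Then the log-partition function f(θ) = log∫exp(θᵀx)dp₀(x) of the corresponding exponential family, where after normalization H(θ) = ∇²f(θ), satisfies ‖∇²f(θ)^{-1/2} D³f(θ)[h] ∇²f(θ)^{-1/2}‖_F ≤ C·‖∇²f(θ)^{-1/2}h‖₂, where D³f(θ)[h] is the matrix (h₁,h₂) ↦ D³f(θ)[h₁,h₂,h]. -/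
open Matrix MeasureTheory

lemma frobNorm_smul {n m : ℕ} (c : ℝ) (M : Matrix (Fin n) (Fin m) ℝ) :
    frobNorm (c • M) = |c| * frobNorm M := by
  unfold frobNorm
  rw [← Real.sqrt_sq_eq_abs, ← Real.sqrt_mul (sq_nonneg c)]
  congr 1
  simp [Finset.mul_sum, mul_pow]

theorem stmt_15 {n : ℕ} (ν : Measure (Fin n → ℝ)) [IsProbabilityMeasure ν] (C : ℝ)
    -- mean and covariance of ν (the tilted measure p_θ)
    (μ : Fin n → ℝ) (hμ : ∀ i, μ i = ∫ x, x i ∂ν)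
    (Sig : Matrix (Fin n) (Fin n) ℝ)
    (hSig : ∀ i j, Sig i j = ∫ x, (x i - μ i) * (x j - μ j) ∂ν)
    (hSigpd : Sig.PosDef)
    (hint2 : ∀ i j, Integrable (fun x => (x i - μ i) * (x j - μ j)) ν)
    (hint3 : ∀ i j k, Integrable (fun x => (x i - μ i) * (x j - μ j) * (x k - μ k)) ν)
    -- R = Σ^{-1/2}; the normalization x ↦ R(x−μ) is isotropic
    (R : Matrix (Fin n) (Fin n) ℝ) (hRpsd : R.PosSemidef) (hRR : R * R = Sig⁻¹)
    -- third-moment bound for the isotropic normalization: for every unit vector v,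
    -- ‖E[x̃ x̃ᵀ (x̃ᵀ v)]‖_F ≤ C with x̃ = R(x−μ)
    (hC : ∀ v : Fin n → ℝ, ∑ i, v i ^ 2 = 1 →
      frobNorm (Matrix.of fun i j =>
        ∫ x, R.mulVec (x - μ) i * R.mulVec (x - μ) j * (R.mulVec (x - μ) ⬝ᵥ v) ∂ν) ≤ C) :
    -- ‖Σ^{-1/2} D³f(θ)[h] Σ^{-1/2}‖_F ≤ C ‖h‖_{∇²f(θ)},
    -- where D³f(θ)[h]_{ij} = E[(x−μ)_i (x−μ)_j ((x−μ)ᵀh)] is the third central moment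
    ∀ h : Fin n → ℝ,
      frobNorm (R * (Matrix.of fun i j =>
          ∫ x, (x i - μ i) * (x j - μ j) * ((x - μ) ⬝ᵥ h) ∂ν) * R) ≤
        C * Real.sqrt (h ⬝ᵥ Sig.mulVec h) := by
  intro h
  have hRsymm : Rᵀ = R := hRpsd.1
  have hRs : ∀ i j, R i j = R j i := fun i j => by
    have h0 := congrFun (congrFun hRsymm i) j
    rw [Matrix.transpose_apply] at h0
    exact h0.symm
  have hSdet : Sig.det ≠ 0 := ne_of_gt hSigpd.det_pos
  have hRdet : R.det ≠ 0 := by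
    have h1 : R.det * R.det = (Sig⁻¹).det := by rw [← Matrix.det_mul, hRR]
    have h2 : (Sig⁻¹).det ≠ 0 := by
      rw [Matrix.det_nonsing_inv, Ring.inverse_eq_inv']
      exact inv_ne_zero hSdet
    intro h0
    exact h2 (by rw [← h1, h0, mul_zero])
  have hRinv : R * R⁻¹ = 1 := Matrix.mul_nonsing_inv R (isUnit_iff_ne_zero.2 hRdet)
  have hSigRR : R⁻¹ * R⁻¹ = Sig := by
    rw [← Matrix.mul_inv_rev, hRR,
      Matrix.nonsing_inv_nonsing_inv Sig (isUnit_iff_ne_zero.2 hSdet)]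
  -- integrability
  have hint3' : ∀ (k l : Fin n) (w : Fin n → ℝ),
      Integrable (fun x => (x k - μ k) * (x l - μ l) * ((x - μ) ⬝ᵥ w)) ν := by
    intro k l w
    have heq : (fun x : Fin n → ℝ => (x k - μ k) * (x l - μ l) * ((x - μ) ⬝ᵥ w))
        = fun x => ∑ p, ((x k - μ k) * (x l - μ l) * (x p - μ p)) * w p := by
      funext x
      simp only [dotProduct, Pi.sub_apply, Finset.mul_sum]
      exact Finset.sum_congr rfl fun p _ => by ring
    rw [heq]
    exact integrable_finset_sum _ fun p _ => (hint3 k l p).mul_const (w p)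
  -- key identity
  have key : ∀ w : Fin n → ℝ,
      (Matrix.of fun i j =>
        ∫ x, R.mulVec (x - μ) i * R.mulVec (x - μ) j * ((x - μ) ⬝ᵥ w) ∂ν)
        = R * (Matrix.of fun i j =>
            ∫ x, (x i - μ i) * (x j - μ j) * ((x - μ) ⬝ᵥ w) ∂ν) * R := by
    intro w
    ext i j
    have hmv : ∀ (x : Fin n → ℝ) (i : Fin n),
        R.mulVec (x - μ) i = ∑ k, R i k * (x k - μ k) := by
      intro x i
      simp [Matrix.mulVec, dotProduct, Pi.sub_apply]
    have e1 : ∀ x : Fin n → ℝ,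
        R.mulVec (x - μ) i * R.mulVec (x - μ) j * ((x - μ) ⬝ᵥ w)
          = ∑ k, ∑ l, (R i k * R j l) *
              ((x k - μ k) * (x l - μ l) * ((x - μ) ⬝ᵥ w)) := by
      intro x
      rw [hmv x i, hmv x j, Finset.sum_mul_sum, Finset.sum_mul]
      refine Finset.sum_congr rfl fun k _ => ?_
      rw [Finset.sum_mul]
      exact Finset.sum_congr rfl fun l _ => by ring
    rw [Matrix.of_apply]
    simp only [e1]
    rw [integral_finset_sum _ fun k _ =>
      integrable_finset_sum _ fun l _ => ((hint3' k l w).const_mul _)]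
    have step : ∀ k : Fin n,
        (∫ a, ∑ l, R i k * R j l *
            ((a k - μ k) * (a l - μ l) * ((a - μ) ⬝ᵥ w)) ∂ν)
          = ∑ l, R i k * R j l *
              ∫ a, (a k - μ k) * (a l - μ l) * ((a - μ) ⬝ᵥ w) ∂ν := by
      intro k
      rw [integral_finset_sum _ fun l _ => ((hint3' k l w).const_mul _)]
      exact Finset.sum_congr rfl fun l _ => integral_const_mul _ _
    simp only [step]
    rw [Matrix.mul_apply, Finset.sum_comm]
    refine Finset.sum_congr rfl fun l _ => ?_
    rw [Matrix.mul_apply, Finset.sum_mul]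
    refine Finset.sum_congr rfl fun k _ => ?_
    rw [Matrix.of_apply, hRs l j]
    ring
  by_cases hh : h = 0
  · subst hh
    have hz : (Matrix.of fun i j =>
        ∫ x, (x i - μ i) * (x j - μ j) * ((x - μ) ⬝ᵥ (0 : Fin n → ℝ)) ∂ν)
        = (0 : Matrix (Fin n) (Fin n) ℝ) := by
      ext i j
      simp [dotProduct_zero]
    rw [hz, Matrix.mul_zero, Matrix.zero_mul]
    simp [frobNorm, zero_dotProduct]
  · -- main case
    have hq : 0 < h ⬝ᵥ Sig.mulVec h := by
      have := hSigpd.dotProduct_mulVec_pos hh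
      simpa using this
    set s := Real.sqrt (h ⬝ᵥ Sig.mulVec h) with hs_def
    have hs : 0 < s := Real.sqrt_pos.2 hq
    have hss : s * s = h ⬝ᵥ Sig.mulVec h := Real.mul_self_sqrt hq.le
    set u := R⁻¹.mulVec h with hu_def
    set v := s⁻¹ • u with hv_def
    have hRv : R.mulVec v = s⁻¹ • h := by
      rw [hv_def, Matrix.mulVec_smul, hu_def, Matrix.mulVec_mulVec, hRinv,
        Matrix.one_mulVec]
    have huu : u ⬝ᵥ u = h ⬝ᵥ Sig.mulVec h := by
      have hvm : Matrix.vecMul u R⁻¹ = Sig.mulVec h := by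
        rw [← Matrix.mulVec_transpose, Matrix.transpose_nonsing_inv, hRsymm,
          hu_def, Matrix.mulVec_mulVec, hSigRR]
      calc u ⬝ᵥ u = u ⬝ᵥ R⁻¹.mulVec h := by rw [← hu_def]
        _ = Matrix.vecMul u R⁻¹ ⬝ᵥ h := by rw [Matrix.dotProduct_mulVec]
        _ = h ⬝ᵥ Sig.mulVec h := by rw [hvm, dotProduct_comm]
    have hv1 : ∑ i, v i ^ 2 = 1 := by
      have : ∑ i, v i ^ 2 = v ⬝ᵥ v := by
        simp [dotProduct, pow_two]
      rw [this, hv_def, smul_dotProduct, dotProduct_smul,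
        smul_eq_mul, smul_eq_mul, huu, ← hss]
      field_simp
    have hw : ∀ m : Fin n → ℝ, R.mulVec m ⬝ᵥ v = s⁻¹ * (m ⬝ᵥ h) := by
      intro m
      rw [dotProduct_comm, Matrix.dotProduct_mulVec,
        ← Matrix.mulVec_transpose, hRsymm, hRv, smul_dotProduct,
        smul_eq_mul, dotProduct_comm]
    set T : Matrix (Fin n) (Fin n) ℝ := Matrix.of fun i j =>
      ∫ x, (x i - μ i) * (x j - μ j) * ((x - μ) ⬝ᵥ h) ∂ν with hT_def
    have hMv : (Matrix.of fun i j =>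
        ∫ x, R.mulVec (x - μ) i * R.mulVec (x - μ) j * (R.mulVec (x - μ) ⬝ᵥ v) ∂ν)
        = s⁻¹ • (R * T * R) := by
      ext i j
      have e2 : ∀ x : Fin n → ℝ,
          R.mulVec (x - μ) i * R.mulVec (x - μ) j * (R.mulVec (x - μ) ⬝ᵥ v)
            = s⁻¹ * (R.mulVec (x - μ) i * R.mulVec (x - μ) j * ((x - μ) ⬝ᵥ h)) := by
        intro x
        rw [hw]
        ring
      rw [Matrix.of_apply]
      simp only [e2]
      rw [integral_const_mul, Matrix.smul_apply, smul_eq_mul]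
      congr 1
      have := congrFun (congrFun (key h) i) j
      rw [Matrix.of_apply] at this
      rw [this, ← hT_def]
    have hbound := hC v hv1
    rw [hMv, frobNorm_smul, abs_of_pos (inv_pos.2 hs)] at hbound
    calc frobNorm (R * T * R) = s * (s⁻¹ * frobNorm (R * T * R)) := by
          field_simp
      _ ≤ s * C := mul_le_mul_of_nonneg_left hbound hs.le
      _ = C * s := mul_comm _ _
end
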